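/- For all n ≥ 0, a_1(7n+5) ≡ 0 (mod 7), where a_1(n) = p(n) is the ordinary partition function with generating function 1/(q;q)_∞. -/

import Mathlib

open PowerSeries Finset

/-- Truncated product `∏_{j=1}^{N} (1 - q^{j})`, approximating `(q;q)_∞`. -/
noncomputable def etaTrunc (N : ℕ) : PowerSeries ℤ :=
  ∏ j ∈ Finset.range N, (1 - (PowerSeries.X : PowerSeries ℤ) ^ (j + 1))

namespace Rama

/-- triangular numbers -/
def tri : ℕ → ℕ
  | 0 => 0
  | n+1 => tri n + n + 1

lemma tri_succ (n : ℕ) : tri (n+1) = tri n + n + 1 := rfl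

lemma tri_ge (n : ℕ) : n ≤ tri n := by
  induction n with
  | zero => simp [tri]
  | succ n ih => rw [tri_succ]; omega

/-- exponent in the finite Jacobi triple product -/
def ee (n k : ℕ) : ℕ := if n ≤ k then tri (k - n) else tri (n - k - 1)

lemma ee_succ_succ (n k : ℕ) : ee (n+1) (k+1) = ee n k := by
  simp only [ee, Nat.succ_sub_succ, Nat.add_le_add_iff_right]

lemma ee_right (n k : ℕ) : ee n k + k + 1 = n + ee n (k+1) := by
  rcases le_or_gt n k with h | h
  · simp only [ee, if_pos h, if_pos (h.trans (Nat.le_succ k))]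
    have h1 : k + 1 - n = (k - n) + 1 := by omega
    rw [h1, tri_succ]; omega
  · rcases eq_or_lt_of_le (Nat.succ_le_of_lt h) with h2 | h2
    · simp only [ee, if_neg (not_le.mpr h), if_pos h2.le, ← h2]
      simp [tri]
    · have hkn : ¬ n ≤ k + 1 := by omega
      simp only [ee, if_neg (not_le.mpr h), if_neg hkn]
      have h2' : n - (k+1) - 1 = n - k - 2 := by omega
      have h1 : n - k - 1 = (n - k - 2) + 1 := by omega
      rw [h2', h1, tri_succ]; omega

lemma ee_left (n k : ℕ) : ee (n+1) k + k = n + ee n k := by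
  rcases lt_trichotomy k n with h | h | h
  · have hn1 : ¬ n + 1 ≤ k := by omega
    simp only [ee, if_neg hn1, if_neg (not_le.mpr h)]
    obtain ⟨d, hd⟩ : ∃ d, n - k = d + 1 := ⟨n - k - 1, by omega⟩
    have h2' : n + 1 - k - 1 = n - k := by omega
    rw [h2', hd, tri_succ]
    simp only [Nat.add_sub_cancel]
    omega
  · subst h
    have hn1 : ¬ k + 1 ≤ k := by omega
    simp only [ee, if_neg hn1, if_pos (le_refl k)]
    have h2' : k + 1 - k - 1 = 0 := by omega
    have h3 : k - k = 0 := by omega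
    rw [h2', h3]; simp [tri]
  · simp only [ee, if_pos (by omega : n + 1 ≤ k), if_pos h.le]
    have h1 : k - n = (k - (n+1)) + 1 := by omega
    rw [h1, tri_succ]; omega

/-- Gaussian binomial as an integer power series (value is actually a polynomial). -/
noncomputable def qb : ℕ → ℕ → PowerSeries ℤ
  | 0, 0 => 1
  | 0, _+1 => 0
  | _+1, 0 => 1
  | n+1, k+1 => qb n (k+1) + X^(n-k) * qb n k

@[simp] lemma qb_zero_right (n : ℕ) : qb n 0 = 1 := by cases n <;> rfl

lemma qb_eq_zero {n k : ℕ} (h : n < k) : qb n k = 0 := by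
  induction n generalizing k with
  | zero =>
      rcases k with _ | k
      · omega
      · rfl
  | succ n ih =>
      rcases k with _ | k
      · omega
      · show qb n (k+1) + X^(n-k) * qb n k = 0
        rw [ih (by omega), ih (by omega)]; ring

@[simp] lemma qb_self (n : ℕ) : qb n n = 1 := by
  induction n with
  | zero => rfl
  | succ n ih =>
      show qb n (n+1) + X^(n-n) * qb n n = 1
      rw [qb_eq_zero (by omega), ih]; simp

lemma qb_pascalA (n k : ℕ) : qb (n+1) (k+1) = qb n (k+1) + X^(n-k) * qb n k := rfl

variable {R : Type*} [CommRing R]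

/-- Geometric series `∑_{t ∣ i} X^i`, the inverse of `1 - X^t`. -/
noncomputable def geom (R : Type*) [CommRing R] (t : ℕ) : PowerSeries R :=
  PowerSeries.mk (fun i => if t ∣ i then 1 else 0)

lemma one_sub_X_pow_mul_geom (t : ℕ) (ht : 0 < t) :
    (1 - X ^ t) * geom R t = 1 := by
  ext n
  rw [sub_mul, one_mul, map_sub, coeff_X_pow_mul', coeff_one]
  simp only [geom, coeff_mk]
  rcases Nat.eq_zero_or_pos n with rfl | hn
  · rw [if_pos (dvd_zero t), if_neg (by omega : ¬ t ≤ 0), if_pos rfl]; ring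
  · rw [if_neg (by omega : ¬ n = 0)]
    by_cases hle : t ≤ n
    · rw [if_pos hle]
      have hiff : t ∣ n ↔ t ∣ n - t := by
        constructor
        · exact fun h => Nat.dvd_sub h dvd_rfl
        · intro h
          have h2 : n - t + t = n := Nat.sub_add_cancel hle
          exact h2 ▸ Nat.dvd_add h dvd_rfl
      by_cases hd : t ∣ n
      · rw [if_pos hd, if_pos (hiff.mp hd)]; ring
      · rw [if_neg hd, if_neg (fun c => hd (hiff.mpr c))]; ring
    · rw [if_neg hle, if_neg (fun hd => hle (Nat.le_of_dvd hn hd))]; ring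

/-- `etaTrunc` has an explicit inverse. -/
noncomputable def etaInv (N : ℕ) : PowerSeries ℤ :=
  ∏ j ∈ Finset.range N, geom ℤ (j + 1)

lemma etaTrunc_mul_etaInv (N : ℕ) : etaTrunc N * etaInv N = 1 := by
  rw [etaTrunc, etaInv, ← Finset.prod_mul_distrib]
  rw [Finset.prod_eq_one]
  intro j _
  exact one_sub_X_pow_mul_geom (j + 1) (Nat.succ_pos j)

lemma isUnit_etaTrunc (N : ℕ) : IsUnit (etaTrunc N) :=
  IsUnit.of_mul_eq_one _ (etaTrunc_mul_etaInv N)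

lemma etaTrunc_succ (N : ℕ) : etaTrunc (N+1) = etaTrunc N * (1 - X ^ (N+1)) := by
  rw [etaTrunc, etaTrunc, Finset.prod_range_succ]

/-- The key product identity for Gaussian binomials. -/
lemma qb_prodId : ∀ n k, k ≤ n → qb n k * (etaTrunc k * etaTrunc (n - k)) = etaTrunc n := by
  intro n
  induction n with
  | zero => intro k hk; interval_cases k; simp [etaTrunc]
  | succ n ih =>
      intro k hk
      rcases k with _ | k
      · simp [etaTrunc]
      rcases eq_or_lt_of_le hk with h | h
      · rw [h]; simp [etaTrunc]
      have hk' : k + 1 ≤ n := by omega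
      have hk'' : k ≤ n := by omega
      rw [qb_pascalA]
      have e6 : n - (k+1) + 1 = n - k := by omega
      have e2 : etaTrunc (n + 1 - (k+1)) = etaTrunc (n - (k+1)) * (1 - X ^ (n - k)) := by
        rw [show n + 1 - (k+1) = (n - (k+1)) + 1 by omega, etaTrunc_succ, e6]
      have e2b : etaTrunc (n - k) = etaTrunc (n - (k+1)) * (1 - X ^ (n - k)) := by
        conv_lhs => rw [← e6]
        rw [etaTrunc_succ, e6]
      have e3 : etaTrunc (k + 1) = etaTrunc k * (1 - X ^ (k+1)) := etaTrunc_succ k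
      have i1 := ih (k+1) hk'
      have i2 := ih k hk''
      have e4 : etaTrunc (n+1) = etaTrunc n * (1 - X ^ (n+1)) := etaTrunc_succ n
      have e5 : (X : PowerSeries ℤ) ^ (n - k) * X ^ (k+1) = X ^ (n+1) := by
        rw [← pow_add]
        congr 1
        omega
      rw [e2, e4]
      linear_combination (1 - (X:PowerSeries ℤ) ^ (n-k)) * i1
        + (X:PowerSeries ℤ)^(n-k) * (1 - X^(k+1)) * i2
        + (X:PowerSeries ℤ)^(n-k) * qb n k * etaTrunc (n - (k+1)) * (1 - X^(n-k)) * e3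
        - (X:PowerSeries ℤ)^(n-k) * (1 - X^(k+1)) * qb n k * etaTrunc k * e2b
        - etaTrunc n * e5

lemma qb_pascalB (n k : ℕ) : qb (n+1) (k+1) = X^(k+1) * qb n (k+1) + qb n k := by
  rcases lt_trichotomy n k with h | h | h
  · rw [qb_eq_zero (by omega), qb_eq_zero (by omega), qb_eq_zero (by omega)]; ring
  · subst h; rw [qb_self, qb_self, qb_eq_zero (by omega)]; ring
  · have hu : IsUnit (etaTrunc (k+1) * etaTrunc (n - k)) :=
      (isUnit_etaTrunc _).mul (isUnit_etaTrunc _)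
    refine hu.mul_left_cancel ?_
    have p1 := qb_prodId (n+1) (k+1) (by omega)
    rw [show n + 1 - (k+1) = n - k by omega] at p1
    have p2 := qb_prodId n (k+1) (by omega)
    have p3 := qb_prodId n k (by omega)
    have e6 : n - (k+1) + 1 = n - k := by omega
    have e2b : etaTrunc (n - k) = etaTrunc (n - (k+1)) * (1 - X ^ (n - k)) := by
      conv_lhs => rw [← e6]
      rw [etaTrunc_succ, e6]
    have e3 : etaTrunc (k + 1) = etaTrunc k * (1 - X ^ (k+1)) := etaTrunc_succ k
    have e4 : etaTrunc (n+1) = etaTrunc n * (1 - X ^ (n+1)) := etaTrunc_succ n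
    have e5 : (X : PowerSeries ℤ) ^ (n - k) * X ^ (k+1) = X ^ (n+1) := by
      rw [← pow_add]; congr 1; omega
    linear_combination p1 + e4 - (X:PowerSeries ℤ)^(k+1) * qb n (k+1) * etaTrunc (k+1) * e2b
      - (X:PowerSeries ℤ)^(k+1) * (1 - X^(n-k)) * p2 - qb n k * etaTrunc (n-k) * e3
      - (1 - X^(k+1)) * p3 + etaTrunc n * e5

/-- coefficients of the finite Jacobi triple product -/
noncomputable def cc (n k : ℕ) : PowerSeries ℤ :=
  C (R := ℤ) ((-1)^(n+k)) * X^(ee n k) * qb (2*n) k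

/-- the explicit polynomial side of the finite Jacobi triple product -/
noncomputable def RS (n : ℕ) : Polynomial (PowerSeries ℤ) :=
  ∑ k ∈ Finset.range (2*n+1), Polynomial.C (cc n k) * Polynomial.X ^ k

lemma coeff_RS (n m : ℕ) : (RS n).coeff m = cc n m := by
  rw [RS, Polynomial.finset_sum_coeff]
  simp only [Polynomial.coeff_C_mul, Polynomial.coeff_X_pow, mul_ite, mul_one, mul_zero]
  rw [Finset.sum_ite_eq (Finset.range (2*n+1)) m (fun k => cc n k)]
  rcases lt_or_ge m (2*n+1) with h | h
  · rw [if_pos (Finset.mem_range.mpr h)]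
  · rw [if_neg (by simpa using h)]
    rw [cc, qb_eq_zero (by omega)]
    simp

lemma ccStep (n m : ℕ) :
    cc (n+1) m = cc n m * (-(X^n)) + (if 1 ≤ m then cc n (m-1) * ((1:PowerSeries ℤ) + X^(2*n+1)) else 0)
      + (if 2 ≤ m then cc n (m-2) * (-(X^(n+1))) else 0) := by
  rcases m with _ | _ | k
  · -- m = 0
    rw [if_neg (by omega), if_neg (by omega)]
    simp only [cc, map_pow, map_neg, map_one, qb_zero_right]
    have h := ee_left n 0
    have m0 : (X:PowerSeries ℤ)^(ee (n+1) 0) = X^(ee n 0) * X^n := by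
      rw [← pow_add]; congr 1; omega
    linear_combination ((-1:PowerSeries ℤ)^(n+1)) * m0
  · -- m = 1
    rw [if_pos (by omega), if_neg (by omega)]
    simp only [cc, map_pow, map_neg, map_one, qb_zero_right, Nat.sub_self]
    have pA1 := qb_pascalA (2*n+1) 0
    rw [show 2*n+1+1 = 2*n+2 by ring, Nat.sub_zero, qb_zero_right] at pA1
    have pB1' := qb_pascalB (2*n) 0
    rw [qb_zero_right] at pB1'
    have r0 := ee_right n 0
    rw [show (0:ℕ) + 1 = 1 by omega] at r0
    have hB : ee (n+1) 1 = ee n 0 := ee_succ_succ n 0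
    have m1' : (X:PowerSeries ℤ)^(ee (n+1) 1) * X^(0+1) = X^(ee n 1) * X^n := by
      rw [← pow_add, ← pow_add]; congr 1; omega
    have m4' : (X:PowerSeries ℤ)^(ee (n+1) 1) = X^(ee n 0) := by rw [hB]
    rw [show 2*(n+1) = 2*n+2 by ring]
    linear_combination ((-1:PowerSeries ℤ)^(n+1+1)) * X^(ee (n+1) 1) * pA1
      + ((-1:PowerSeries ℤ)^(n+1+1)) * X^(ee (n+1) 1) * pB1'
      + ((-1:PowerSeries ℤ)^(n+1+1)) * qb (2*n) 1 * m1'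
      + ((-1:PowerSeries ℤ)^(n+1+1)) * ((1:PowerSeries ℤ) + X^(2*n+1)) * m4'
  · -- m = k+2
    rw [if_pos (by omega), if_pos (by omega)]
    simp only [cc, map_pow, map_neg, map_one, Nat.add_sub_cancel,
      show k+2-1 = k+1 by omega, show k+2-2 = k by omega]
    rcases le_or_gt k (2*n) with hk | hk
    · have pA : qb (2*n+2) (k+2) = qb (2*n+1) (k+2) + X^(2*n-k)*qb (2*n+1) (k+1) := by
        have h := qb_pascalA (2*n+1) (k+1)
        rw [show 2*n+1+1 = 2*n+2 by ring, show 2*n+1-(k+1) = 2*n-k by omega] at h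
        exact h
      have pB1 := qb_pascalB (2*n) (k+1)
      have pB2 := qb_pascalB (2*n) k
      have r1 := ee_right n k
      have r2 := ee_right n (k+1)
      rw [show k + 1 + 1 = k + 2 by omega] at r2
      have hB : ee (n+1) (k+2) = ee n (k+1) := ee_succ_succ n (k+1)
      have m1 : (X:PowerSeries ℤ)^(ee (n+1) (k+2)) * X^(k+2) = X^(ee n (k+2)) * X^n := by
        rw [← pow_add, ← pow_add]; congr 1; omega
      have m2 : (X:PowerSeries ℤ)^(ee (n+1) (k+2)) * X^(2*n-k) * X^(k+1) = X^(ee n (k+1)) * X^(2*n+1) := by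
        rw [← pow_add, ← pow_add, ← pow_add]; congr 1; omega
      have m3 : (X:PowerSeries ℤ)^(ee (n+1) (k+2)) * X^(2*n-k) = X^(ee n k) * X^(n+1) := by
        rw [← pow_add, ← pow_add]; congr 1; omega
      have m4 : (X:PowerSeries ℤ)^(ee (n+1) (k+2)) = X^(ee n (k+1)) := by rw [hB]
      rw [show 2*(n+1) = 2*n+2 by ring]
      linear_combination ((-1:PowerSeries ℤ)^(n+k+3)) * X^(ee (n+1) (k+2)) * pA
        + ((-1:PowerSeries ℤ)^(n+k+3)) * X^(ee (n+1) (k+2)) * pB1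
        + ((-1:PowerSeries ℤ)^(n+k+3)) * X^(ee (n+1) (k+2)) * X^(2*n-k) * pB2
        + ((-1:PowerSeries ℤ)^(n+k+3)) * qb (2*n) (k+2) * m1
        + ((-1:PowerSeries ℤ)^(n+k+3)) * qb (2*n) (k+1) * m4
        + ((-1:PowerSeries ℤ)^(n+k+3)) * qb (2*n) (k+1) * m2
        + ((-1:PowerSeries ℤ)^(n+k+3)) * qb (2*n) k * m3
    · rw [qb_eq_zero (show 2*n < k+2 by omega), qb_eq_zero (show 2*n < k+1 by omega),
        qb_eq_zero hk, qb_eq_zero (show 2*(n+1) < k+2 by omega)]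
      ring

lemma RS_step (n : ℕ) :
    RS n * ((1 - Polynomial.C ((X:PowerSeries ℤ)^(n+1)) * Polynomial.X) *
      (Polynomial.X - Polynomial.C ((X:PowerSeries ℤ)^n))) = RS (n+1) := by
  have hx : (X:PowerSeries ℤ)^(2*n+1) = X^(n+1) * X^n := by
    rw [← pow_add]; congr 1; omega
  have hQ : ((1 - Polynomial.C ((X:PowerSeries ℤ)^(n+1)) * Polynomial.X) *
      (Polynomial.X - Polynomial.C ((X:PowerSeries ℤ)^n)))
      = Polynomial.C (-((X:PowerSeries ℤ)^n)) + Polynomial.C ((1:PowerSeries ℤ) + X^(2*n+1)) * Polynomial.X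
        + Polynomial.C (-((X:PowerSeries ℤ)^(n+1))) * Polynomial.X^2 := by
    rw [map_add, map_neg, map_neg, map_one, hx, map_mul]
    ring
  have expand : RS n * ((1 - Polynomial.C ((X:PowerSeries ℤ)^(n+1)) * Polynomial.X) *
      (Polynomial.X - Polynomial.C ((X:PowerSeries ℤ)^n)))
      = RS n * Polynomial.C (-((X:PowerSeries ℤ)^n))
        + (RS n * Polynomial.C ((1:PowerSeries ℤ) + X^(2*n+1))) * Polynomial.X^1
        + (RS n * Polynomial.C (-((X:PowerSeries ℤ)^(n+1)))) * Polynomial.X^2 := by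
    rw [hQ]; ring
  rw [expand]
  ext m
  rw [Polynomial.coeff_add, Polynomial.coeff_add, Polynomial.coeff_mul_X_pow',
    Polynomial.coeff_mul_X_pow']
  simp only [Polynomial.coeff_mul_C, coeff_RS]
  rw [ccStep n m]

lemma RS_eq (n : ℕ) :
    (∏ j ∈ Finset.range n, ((1 - Polynomial.C ((X:PowerSeries ℤ)^(j+1)) * Polynomial.X) *
      (Polynomial.X - Polynomial.C ((X:PowerSeries ℤ)^j)))) = RS n := by
  induction n with
  | zero =>
      rw [Finset.prod_range_zero, RS]
      simp [cc, ee, tri]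
  | succ n ih => rw [Finset.prod_range_succ, ih, RS_step]

lemma Jfin (N : ℕ) :
    etaTrunc (N+1) * etaTrunc N
      = ∑ k ∈ Finset.range (2*(N+1)+1), (k : PowerSeries ℤ) * cc (N+1) k := by
  have h := RS_eq (N+1)
  rw [Finset.prod_range_succ'] at h
  have hD := congrArg (fun p => Polynomial.eval (1 : PowerSeries ℤ) (Polynomial.derivative p)) h
  simp only [RS, Polynomial.derivative_mul, Polynomial.derivative_sum, Polynomial.derivative_sub,
    Polynomial.derivative_one, Polynomial.derivative_X, Polynomial.derivative_C_mul_X_pow,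
    Polynomial.derivative_C_mul, Polynomial.derivative_C,
    Polynomial.eval_add, Polynomial.eval_mul, Polynomial.eval_sub, Polynomial.eval_one,
    Polynomial.eval_C, Polynomial.eval_X, Polynomial.eval_prod, Polynomial.eval_finset_sum,
    Polynomial.eval_pow, pow_zero, sub_self, mul_zero, zero_mul, mul_one, one_mul, one_pow,
    zero_add, add_zero, zero_sub, sub_zero] at hD
  have hL : (∏ j ∈ Finset.range N, ((1 - (X:PowerSeries ℤ)^(j+1+1)) * (1 - (X:PowerSeries ℤ)^(j+1))))
      * (1 - (X:PowerSeries ℤ)^(0+1)) = etaTrunc (N+1) * etaTrunc N := by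
    rw [Finset.prod_mul_distrib, etaTrunc, etaTrunc, Finset.prod_range_succ']
    ring
  rw [← hL]
  rw [hD]
  apply Finset.sum_congr rfl
  intro k _
  rw [Polynomial.derivative_X_pow, Polynomial.eval_mul, Polynomial.eval_C, Polynomial.eval_pow,
    Polynomial.eval_X, one_pow, mul_one, mul_comm]

/-! ### congruence modulo `X^L` -/

def Cng {R : Type*} [CommRing R] (L : ℕ) (F G : PowerSeries R) : Prop :=
  (X : PowerSeries R)^L ∣ (F - G)

namespace Cng

variable {R : Type*} [CommRing R] {L : ℕ} {F G H F' G' : PowerSeries R}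

lemma refl (F : PowerSeries R) : Cng L F F := by simp [Cng]

lemma symm (h : Cng L F G) : Cng L G F := by
  simpa [Cng, neg_sub] using (dvd_neg).mpr h

lemma trans (h1 : Cng L F G) (h2 : Cng L G H) : Cng L F H := by
  have := dvd_add h1 h2
  simpa [Cng] using this

lemma add (h1 : Cng L F G) (h2 : Cng L F' G') : Cng L (F + F') (G + G') := by
  have := dvd_add h1 h2
  simpa [Cng, add_sub_add_comm] using this

lemma mul_left (H : PowerSeries R) (h : Cng L F G) : Cng L (H * F) (H * G) := by
  have : H * F - H * G = H * (F - G) := by ring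
  rw [Cng, this]
  exact Dvd.dvd.mul_left h H

lemma mul_right (H : PowerSeries R) (h : Cng L F G) : Cng L (F * H) (G * H) := by
  have : F * H - G * H = (F - G) * H := by ring
  rw [Cng, this]
  exact Dvd.dvd.mul_right h H

lemma mul (h1 : Cng L F G) (h2 : Cng L F' G') : Cng L (F * F') (G * G') :=
  (mul_left F h2).trans (mul_right G' h1)

lemma of_dvd_dvd (h1 : (X : PowerSeries R)^L ∣ F) (h2 : (X : PowerSeries R)^L ∣ G) :
    Cng L F G := dvd_sub h1 h2

lemma sum {ι : Type*} (s : Finset ι) (f g : ι → PowerSeries R)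
    (h : ∀ i ∈ s, Cng L (f i) (g i)) : Cng L (∑ i ∈ s, f i) (∑ i ∈ s, g i) := by
  rw [Cng, ← Finset.sum_sub_distrib]
  exact Finset.dvd_sum h

lemma cancel_unit (hU : IsUnit H) (h : Cng L (H * F) (H * G)) : Cng L F G := by
  obtain ⟨u, hu⟩ := hU
  rw [Cng] at h ⊢
  have : F - G = (↑u⁻¹ : PowerSeries R) * (H * F - H * G) := by
    have h1 : (↑u⁻¹ : PowerSeries R) * H = 1 := by rw [← hu]; exact u.inv_mul
    calc F - G = ((↑u⁻¹ : PowerSeries R) * H) * F - ((↑u⁻¹ : PowerSeries R) * H) * G := by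
          rw [h1]; ring
    _ = (↑u⁻¹ : PowerSeries R) * (H * F - H * G) := by ring
  rw [this]
  exact Dvd.dvd.mul_left h _

lemma of_coeff (h : ∀ i, i < L → PowerSeries.coeff i F = PowerSeries.coeff i G) :
    Cng L F G := by
  rw [Cng, X_pow_dvd_iff]
  intro i hi
  rw [map_sub, sub_eq_zero]
  exact h i hi

lemma coeff_eq (h : Cng L F G) {i : ℕ} (hi : i < L) :
    PowerSeries.coeff i F = PowerSeries.coeff i G := by
  rw [Cng, X_pow_dvd_iff] at h
  have := h i hi
  rw [map_sub, sub_eq_zero] at this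
  exact this

end Cng

lemma cng_eta {L s t : ℕ} (h : s ≤ t) (hs : L ≤ s + 1) :
    Cng L (etaTrunc t) (etaTrunc s) := by
  induction t, h using Nat.le_induction with
  | base => exact Cng.refl _
  | succ t ht ih =>
      rw [etaTrunc_succ]
      have h1 : Cng L ((1 : PowerSeries ℤ) - X ^ (t+1)) 1 := by
        rw [Cng]
        have h2 : ((1:PowerSeries ℤ) - X^(t+1)) - 1 = -(X^(t+1)) := by ring
        rw [h2]
        exact (dvd_neg).mpr (pow_dvd_pow X (by omega))
      exact (Cng.mul_left (etaTrunc t) h1).trans (by rw [mul_one]; exact ih)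

lemma sum_range_add' {β : Type*} [AddCommMonoid β] (f : ℕ → β) (a b : ℕ) :
    ∑ i ∈ Finset.range (a+b), f i = ∑ i ∈ Finset.range a, f i + ∑ i ∈ Finset.range b, f (a+i) := by
  induction b with
  | zero => simp
  | succ b ih =>
      rw [show a + (b+1) = (a+b)+1 by omega, Finset.sum_range_succ, ih, Finset.sum_range_succ,
        add_assoc]

lemma eebound {m n k : ℕ} (hn : n = 2*m+2) (he : ee n k ≤ m) : m+1 ≤ k ∧ k ≤ n+m := by
  subst hn
  rw [ee] at he
  split_ifs at he with h
  · have := tri_ge (k - (2*m+2)); omega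
  · have := tri_ge (2*m+2 - k - 1); omega

lemma Cng.pow3 {L : ℕ} {F G : PowerSeries ℤ} (h : Cng L F G) : Cng L (F^3) (G^3) := by
  rw [show F^3 = F*(F*F) by ring, show G^3 = G*(G*G) by ring]
  exact h.mul (h.mul h)

lemma cube (m M : ℕ) (hm : m ≤ M) :
    (PowerSeries.coeff m) ((etaTrunc M)^3)
      = ∑ j ∈ Finset.range (m+1), (if m = tri j then ((-1:ℤ)^j * (2*j+1)) else 0) := by
  obtain ⟨n, hn⟩ : ∃ n, n = 2*m+2 := ⟨_, rfl⟩
  have hJ : etaTrunc n * etaTrunc (2*m+1)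
      = ∑ k ∈ Finset.range (2*n+1), (k : PowerSeries ℤ) * cc n k := by
    have h := Jfin (2*m+1)
    rw [show 2*m+1+1 = n by omega] at h
    exact h
  have hQn := qb_prodId (2*n) n (by omega)
  rw [show 2*n - n = n by omega] at hQn
  -- Step 1 : replace qb (2n) k by qb (2n) n in each term
  have h1 : Cng (m+1) (∑ k ∈ Finset.range (2*n+1), (k : PowerSeries ℤ) * cc n k)
      ((∑ k ∈ Finset.range (2*n+1), (k : PowerSeries ℤ) * (C (R := ℤ) ((-1)^(n+k)) * X^(ee n k)))
        * qb (2*n) n) := by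
    rw [Finset.sum_mul]
    apply Cng.sum
    intro k _
    have hck : (k : PowerSeries ℤ) * cc n k
        = ((k : PowerSeries ℤ) * (C (R := ℤ) ((-1)^(n+k)) * X^(ee n k))) * qb (2*n) k := by
      rw [cc]; ring
    rw [hck]
    by_cases he : m+1 ≤ ee n k
    · apply Cng.of_dvd_dvd
      · exact dvd_trans (pow_dvd_pow X he)
          ⟨(k : PowerSeries ℤ) * C (R := ℤ) ((-1)^(n+k)) * qb (2*n) k, by ring⟩
      · exact dvd_trans (pow_dvd_pow X he)
          ⟨(k : PowerSeries ℤ) * C (R := ℤ) ((-1)^(n+k)) * qb (2*n) n, by ring⟩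
    · push_neg at he
      obtain ⟨hk1, hk2⟩ := eebound (k := k) hn (by omega)
      apply Cng.mul_left
      have q1 := qb_prodId (2*n) k (by omega)
      have ek : Cng (m+1) (etaTrunc k) (etaTrunc m) := cng_eta (by omega) (by omega)
      have e2 : Cng (m+1) (etaTrunc (2*n - k)) (etaTrunc m) := cng_eta (by omega) (by omega)
      have en : Cng (m+1) (etaTrunc n) (etaTrunc m) := cng_eta (by omega) (by omega)
      apply Cng.cancel_unit ((isUnit_etaTrunc m).mul (isUnit_etaTrunc m))
      have c1 : Cng (m+1) (etaTrunc m * etaTrunc m * qb (2*n) k)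
          (etaTrunc k * etaTrunc (2*n - k) * qb (2*n) k) :=
        Cng.mul_right _ ((ek.symm).mul (e2.symm))
      have c2 : etaTrunc k * etaTrunc (2*n - k) * qb (2*n) k = etaTrunc (2*n) := by
        linear_combination q1
      have c3 : etaTrunc n * etaTrunc n * qb (2*n) n = etaTrunc (2*n) := by
        linear_combination hQn
      have c4 : Cng (m+1) (etaTrunc n * etaTrunc n * qb (2*n) n)
          (etaTrunc m * etaTrunc m * qb (2*n) n) := Cng.mul_right _ (en.mul en)
      have c5 : Cng (m+1) (etaTrunc m * etaTrunc m * qb (2*n) k)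
          (etaTrunc n * etaTrunc n * qb (2*n) n) := by
        rw [show etaTrunc m * etaTrunc m * qb (2*n) k = etaTrunc m * (etaTrunc m * qb (2*n) k) by ring] at c1 ⊢
        exact (by rw [c2, ← c3] at c1; exact c1 : _)
      exact (by
        have := c5.trans c4
        rw [show etaTrunc m * etaTrunc m * qb (2*n) k
            = etaTrunc m * etaTrunc m * qb (2*n) k by rfl] at this
        exact this)
  -- Step 2 : exact evaluation of the middle sum
  have hT : (∑ k ∈ Finset.range (2*n+1), (k : PowerSeries ℤ) * (C (R := ℤ) ((-1)^(n+k)) * X^(ee n k)))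
      = (∑ j ∈ Finset.range n, C (R := ℤ) ((-1)^j * (2*j+1)) * X^(tri j))
        + ((2*n : ℕ) : PowerSeries ℤ) * (C (R := ℤ) ((-1)^(n+2*n)) * X^(tri n)) := by
    rw [show 2*n+1 = n + (n+1) by omega, sum_range_add']
    rw [← Finset.sum_range_reflect (fun k => (k : PowerSeries ℤ) * (C (R := ℤ) ((-1)^(n+k)) * X^(ee n k))) n]
    rw [Finset.sum_range_succ]
    rw [← add_assoc, ← Finset.sum_add_distrib]
    congr 1
    · apply Finset.sum_congr rfl
      intro j hj
      have hj' : j < n := Finset.mem_range.mp hj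
      have he1 : ee n (n - 1 - j) = tri j := by
        rw [ee, if_neg (by omega)]; congr 1; omega
      have he2 : ee n (n + j) = tri j := by
        rw [ee, if_pos (by omega)]; congr 1; omega
      rw [he1, he2]
      have hs1 : ((-1:ℤ))^(n + (n-1-j)) = -(-1)^j := by
        rw [show n + (n-1-j) = 2*(n-1-j) + (j+1) by omega, pow_add, pow_mul]
        simp [pow_succ]
      have hs2 : ((-1:ℤ))^(n + (n+j)) = (-1)^j := by
        rw [show n + (n+j) = 2*n + j by omega, pow_add, pow_mul]
        simp
      rw [hs1, hs2]
      have hc : ((n + j : ℕ) : PowerSeries ℤ) = ((n - 1 - j : ℕ) : PowerSeries ℤ)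
          + ((2*j+1 : ℕ) : PowerSeries ℤ) := by
        rw [← Nat.cast_add]; congr 1; omega
      rw [hc]
      push_cast
      simp only [map_mul, map_neg, map_one, map_add, map_pow, map_ofNat, map_natCast]
      ring
    · have he : ee n (n + n) = tri n := by
        rw [ee, if_pos (by omega)]; congr 1; omega
      rw [he, show n + (n + n) = n + 2*n by omega, show ((n+n : ℕ) : PowerSeries ℤ) = ((2*n : ℕ) : PowerSeries ℤ) by congr 1; omega]
  -- Step 3 : truncate the exact sum
  have htn : m+1 ≤ tri n := by have h := tri_ge n; omega
  have hg : Cng (m+1) (((2*n : ℕ) : PowerSeries ℤ) * (C (R := ℤ) ((-1)^(n+2*n)) * X^(tri n))) 0 :=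
    Cng.of_dvd_dvd (dvd_trans (pow_dvd_pow X htn)
      ⟨((2*n : ℕ) : PowerSeries ℤ) * C (R := ℤ) ((-1)^(n+2*n)), by ring⟩) (dvd_zero _)
  have h3 : Cng (m+1) (∑ j ∈ Finset.range n, C (R := ℤ) ((-1)^j * (2*j+1)) * X^(tri j))
      (∑ j ∈ Finset.range (m+1), C (R := ℤ) ((-1)^j * (2*j+1)) * X^(tri j)) := by
    rw [show n = (m+1) + (m+1) by omega, sum_range_add']
    have hz : Cng (m+1) (∑ i ∈ Finset.range (m+1),
        C (R := ℤ) ((-1)^(m+1+i) * (2*(m+1+i)+1)) * X^(tri (m+1+i))) 0 := by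
      have h0 : (0 : PowerSeries ℤ) = ∑ _i ∈ Finset.range (m+1), (0 : PowerSeries ℤ) := by simp
      rw [h0]
      apply Cng.sum
      intro i _
      exact Cng.of_dvd_dvd (dvd_trans (pow_dvd_pow X
          (show m+1 ≤ tri (m+1+i) by have := tri_ge (m+1+i); omega))
        ⟨C (R := ℤ) ((-1)^(m+1+i) * (2*(m+1+i)+1)), by ring⟩) (dvd_zero _)
    have := (Cng.refl (∑ j ∈ Finset.range (m+1), C (R := ℤ) ((-1)^j * (2*j+1)) * X^(tri j))).add hz
    simpa using this
  -- assemble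
  have hTJ : Cng (m+1)
      (∑ k ∈ Finset.range (2*n+1), (k : PowerSeries ℤ) * (C (R := ℤ) ((-1)^(n+k)) * X^(ee n k)))
      (∑ j ∈ Finset.range (m+1), C (R := ℤ) ((-1)^j * (2*j+1)) * X^(tri j)) := by
    rw [hT]
    have := h3.add hg
    simpa using this
  have hA : Cng (m+1) (etaTrunc n * etaTrunc (2*m+1))
      ((∑ j ∈ Finset.range (m+1), C (R := ℤ) ((-1)^j * (2*j+1)) * X^(tri j)) * qb (2*n) n) := by
    rw [hJ]
    exact h1.trans (Cng.mul_right _ hTJ)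
  have hEn' : Cng (m+1) (etaTrunc (2*m+1)) (etaTrunc m) := cng_eta (by omega) (by omega)
  have hEn : Cng (m+1) (etaTrunc n) (etaTrunc m) := cng_eta (by omega) (by omega)
  have hE2n : Cng (m+1) (etaTrunc (2*n)) (etaTrunc m) := cng_eta (by omega) (by omega)
  have hEM : Cng (m+1) (etaTrunc M) (etaTrunc m) := cng_eta (by omega) (by omega)
  set J := ∑ j ∈ Finset.range (m+1), C (R := ℤ) ((-1)^j * (2*j+1)) * X^(tri j) with hJdef
  have a3 : Cng (m+1) ((etaTrunc n)^3 * etaTrunc n) ((etaTrunc n)^3 * etaTrunc (2*m+1)) :=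
    Cng.mul_left _ (hEn.trans hEn'.symm)
  have a1 : Cng (m+1) ((etaTrunc n)^3 * etaTrunc (2*m+1)) (J * etaTrunc (2*n)) := by
    have c1 : Cng (m+1) ((etaTrunc n)^3 * etaTrunc (2*m+1))
        ((etaTrunc n)^2 * (J * qb (2*n) n)) := by
      rw [show (etaTrunc n)^3 * etaTrunc (2*m+1)
          = (etaTrunc n)^2 * (etaTrunc n * etaTrunc (2*m+1)) by ring]
      exact Cng.mul_left _ hA
    have c2 : (etaTrunc n)^2 * (J * qb (2*n) n) = J * etaTrunc (2*n) := by
      rw [← hQn]; ring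
    rw [c2] at c1
    exact c1
  have a2 : Cng (m+1) (J * etaTrunc (2*n)) (J * etaTrunc n) :=
    Cng.mul_left J (hE2n.trans hEn.symm)
  have chain : Cng (m+1) ((etaTrunc n)^3 * etaTrunc n) (J * etaTrunc n) :=
    a3.trans (a1.trans a2)
  have chain' : Cng (m+1) (etaTrunc n * (etaTrunc n)^3) (etaTrunc n * J) := by
    rw [mul_comm (etaTrunc n) ((etaTrunc n)^3), mul_comm (etaTrunc n) J]
    exact chain
  have h5 : Cng (m+1) ((etaTrunc n)^3) J := Cng.cancel_unit (isUnit_etaTrunc n) chain'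
  have hM3 : Cng (m+1) ((etaTrunc M)^3) ((etaTrunc n)^3) := (hEM.trans hEn.symm).pow3
  have hfin := (hM3.trans h5).coeff_eq (show m < m+1 by omega)
  rw [hfin, hJdef, map_sum]
  apply Finset.sum_congr rfl
  intro j _
  rw [coeff_C_mul_X_pow]

/-! ### the mod 7 endgame -/

lemma coeff_geom {R : Type*} [CommRing R] (t i : ℕ) :
    PowerSeries.coeff i (geom R t) = if t ∣ i then 1 else 0 := by
  rw [geom, coeff_mk]

/-- support on multiples of `d` -/
def SuppD {R : Type*} [CommRing R] (d : ℕ) (F : PowerSeries R) : Prop :=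
  ∀ i, ¬ d ∣ i → PowerSeries.coeff i F = 0

lemma suppD_one {R : Type*} [CommRing R] (d : ℕ) : SuppD d (1 : PowerSeries R) := by
  intro i hi
  rw [coeff_one, if_neg]
  rintro rfl
  exact hi (dvd_zero d)

lemma suppD_mul {R : Type*} [CommRing R] {d : ℕ} {F G : PowerSeries R}
    (hF : SuppD d F) (hG : SuppD d G) : SuppD d (F * G) := by
  intro i hi
  rw [PowerSeries.coeff_mul]
  apply Finset.sum_eq_zero
  rintro ⟨u, v⟩ huv
  have hs : u + v = i := Finset.HasAntidiagonal.mem_antidiagonal.mp huv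
  by_cases hu : d ∣ u
  · have hv : ¬ d ∣ v := fun hv => hi (hs ▸ dvd_add hu hv)
    rw [hG v hv, mul_zero]
  · rw [hF u hu, zero_mul]

lemma suppD_geom {R : Type*} [CommRing R] {d t : ℕ} (h : d ∣ t) : SuppD d (geom R t) := by
  intro i hi
  rw [coeff_geom, if_neg]
  exact fun c => hi (dvd_trans h c)

lemma suppD_prod {R : Type*} [CommRing R] {d : ℕ} {ι : Type*} (s : Finset ι)
    (f : ι → PowerSeries R) (h : ∀ i ∈ s, SuppD d (f i)) : SuppD d (∏ i ∈ s, f i) :=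
  Finset.prod_induction f (SuppD d) (fun _ _ => suppD_mul) (suppD_one d) h

lemma tri_eq (l : ℕ) : 2 * tri l = l * (l + 1) := by
  induction l with
  | zero => simp [tri]
  | succ l ih => rw [tri_succ]; ring_nf; ring_nf at ih; omega

lemma zmod7_sq (x y : ZMod 7) (h : x^2 + y^2 = 0) : x = 0 := by revert x y; decide

lemma quad7 {l l' : ℕ} (h : (tri l + tri l') % 7 = 5) : ((2*l+1 : ℕ) : ZMod 7) = 0 := by
  have h8 : 8 * (tri l + tri l') + 2 = (2*l+1)^2 + (2*l'+1)^2 := by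
    have t1 := tri_eq l
    have t2 := tri_eq l'
    have e1 : (2*l+1)^2 = 4*(l*(l+1)) + 1 := by ring
    have e2 : (2*l'+1)^2 = 4*(l'*(l'+1)) + 1 := by ring
    omega
  have hc : ((8 * (tri l + tri l') + 2 : ℕ) : ZMod 7) = ((2*l+1 : ℕ) : ZMod 7)^2 + ((2*l'+1 : ℕ) : ZMod 7)^2 := by
    rw [h8]; push_cast; ring
  have hm : ((8 * (tri l + tri l') + 2 : ℕ) : ZMod 7) = 0 := by
    have : (8 * (tri l + tri l') + 2) % 7 = 0 := by omega
    rw [← Nat.mod_add_div (8 * (tri l + tri l') + 2) 7, this]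
    push_cast
    simp [show (7 : ZMod 7) = 0 by decide]
  exact zmod7_sq _ _ (by rw [← hc, hm])

end Rama

/-- `a` has generating function `1/(q;q)_∞`, i.e. `a = p`, the partition function. -/
def IsPartitionGF (a : ℕ → ℤ) : Prop :=
  ∀ N n : ℕ, n ≤ N →
    PowerSeries.coeff n (etaTrunc N * PowerSeries.mk a) =
    PowerSeries.coeff n (1 : PowerSeries ℤ)

open Rama in
theorem stmt_2 (a : ℕ → ℤ) (ha : IsPartitionGF a) :
    ∀ n : ℕ, (7 : ℤ) ∣ a (7 * n + 5) := by
  intro nn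
  classical
  haveI : CharP (PowerSeries (ZMod 7)) 7 :=
    charP_of_injective_ringHom (PowerSeries.C_injective (R := ZMod 7)) 7
  haveI : Fact (Nat.Prime 7) := ⟨by norm_num⟩
  set m := 7 * nn + 5 with hm
  set σ : ℤ →+* ZMod 7 := Int.castRingHom (ZMod 7) with hσ
  set E : PowerSeries (ZMod 7) := PowerSeries.map σ (etaTrunc m) with hE
  set A : PowerSeries (ZMod 7) := PowerSeries.map σ (PowerSeries.mk a) with hA
  have h1 : Cng (m+1) (E * A) 1 := by
    apply Cng.of_coeff
    intro i hi
    have hmap : E * A = PowerSeries.map σ (etaTrunc m * PowerSeries.mk a) := by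
      rw [map_mul]
    rw [hmap, PowerSeries.coeff_map, ha m i (by omega), ← PowerSeries.coeff_map, map_one]
  have hEprod : E = ∏ j ∈ Finset.range m, (1 - (X : PowerSeries (ZMod 7))^(j+1)) := by
    rw [hE, etaTrunc, map_prod]
    apply Finset.prod_congr rfl
    intro j _
    rw [map_sub, map_one, map_pow, PowerSeries.map_X]
  set E7 : PowerSeries (ZMod 7) :=
    ∏ j ∈ Finset.range m, (1 - (X:PowerSeries (ZMod 7))^(7*(j+1))) with hE7def
  have hE7 : E^7 = E7 := by
    rw [hEprod, hE7def, ← Finset.prod_pow]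
    apply Finset.prod_congr rfl
    intro j _
    have hs := sub_pow_char (R := PowerSeries (ZMod 7)) (p := 7) 1
      ((X:PowerSeries (ZMod 7))^(j+1))
    rw [hs, one_pow, ← pow_mul, show (j+1)*7 = 7*(j+1) by ring]
  set G7 : PowerSeries (ZMod 7) := ∏ j ∈ Finset.range m, geom (ZMod 7) (7*(j+1)) with hG7def
  have hG : E7 * G7 = 1 := by
    rw [hE7def, hG7def, ← Finset.prod_mul_distrib]
    apply Finset.prod_eq_one
    intro j _
    exact one_sub_X_pow_mul_geom _ (by omega)
  have hGsupp : SuppD 7 G7 := suppD_prod _ _ (fun j _ => suppD_geom ⟨j+1, rfl⟩)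
  have k0 : G7 * (E^3 * E^3) * (E * A) = A * (E7 * G7) := by
    rw [← hE7]; ring
  rw [hG, mul_one] at k0
  have key : Cng (m+1) A (G7 * (E^3*E^3)) := by
    rw [← k0]
    have h2 := Cng.mul_left (G7 * (E^3*E^3)) h1
    rw [mul_one] at h2
    exact h2
  have hcoeff := key.coeff_eq (show m < m+1 by omega)
  have hAm : PowerSeries.coeff m A = ((a m : ℤ) : ZMod 7) := by
    rw [hA, PowerSeries.coeff_map, PowerSeries.coeff_mk]
    rfl
  have hzero : PowerSeries.coeff m (G7 * (E^3*E^3)) = 0 := by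
    rw [PowerSeries.coeff_mul]
    apply Finset.sum_eq_zero
    rintro ⟨i, j⟩ hij
    have hs : i + j = m := Finset.HasAntidiagonal.mem_antidiagonal.mp hij
    by_cases h7 : 7 ∣ i
    · have hj5 : j % 7 = 5 := by omega
      have hj : PowerSeries.coeff j (E^3 * E^3) = 0 := by
        rw [PowerSeries.coeff_mul]
        apply Finset.sum_eq_zero
        rintro ⟨u, v⟩ huv
        have hsuv : u + v = j := Finset.HasAntidiagonal.mem_antidiagonal.mp huv
        have hcube : ∀ w, w ≤ m → PowerSeries.coeff w (E^3)
            = ∑ l ∈ Finset.range (w+1),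
                (if w = tri l then (((-1:ℤ)^l * (2*l+1) : ℤ) : ZMod 7) else 0) := by
          intro w hw
          rw [hE, ← map_pow, PowerSeries.coeff_map, cube w m hw, map_sum]
          apply Finset.sum_congr rfl
          intro l _
          split_ifs
          · rfl
          · exact map_zero σ
        rw [hcube u (by omega), hcube v (by omega), Finset.sum_mul_sum]
        apply Finset.sum_eq_zero
        intro l _
        apply Finset.sum_eq_zero
        intro l' _
        split_ifs with hu hv
        · have hq := quad7 (l := l) (l' := l') (by omega)
          push_cast at hq
          push_cast
          rw [hq]
          ring
        all_goals simp
      rw [hj, mul_zero]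
    · rw [hGsupp i h7, zero_mul]
  have hfin : ((a m : ℤ) : ZMod 7) = 0 := by rw [← hAm, hcoeff, hzero]
  exact (ZMod.intCast_zmod_eq_zero_iff_dvd (a m) 7).mp hfin
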